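/- Fix n ≥ 1, T ≥ 1, β > 0, μ > 0, K > 0. For t = 1, …, T let Fₜ : ℝⁿ → ℝ be differentiable, β-smooth, attain its infimum Fₜ* = inf Fₜ, and satisfy the Polyak–Łojasiewicz condition with constant μ ((1/2)‖∇Fₜ(x)‖² ≥ μ(Fₜ(x) − Fₜ*) for all x). For t = 1, …, T−1 let ηₜ > 0, Jₜ ≥ 0, σₜ ≥ 0 satisfy |Fₜ₊₁(x) − Fₜ(x)| ≤ Kηₜ for all x, and ‖∇Fₜ₊₁(x) − ∇Fₜ(x)‖ ≤ Jₜ for all x. For t = 1, …, T−1 let (Ωₜ, 𝒜ₜ, μₜ) be probability spaces and Gₜ : ℝⁿ × Ωₜ → ℝⁿ measurable maps such that for every x ∈ ℝⁿ: ∫ Gₜ(x, ω) dμₜ(ω) = ∇Fₜ(x) and ∫ ‖Gₜ(x, ω) − ∇Fₜ(x)‖² dμₜ(ω) ≤ σₜ². Fix x₁ ∈ ℝⁿ, a step size γ ∈ (0, min(1/β, 1/(2μ))), set ζ = γ − γ²β/2, and define the online stochastic gradient descent iterates X₁ ≡ x₁ and Xₜ₊₁(ω₁, …, ωₜ) = Xₜ(ω₁,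 …, ωₜ₋₁) − γ Gₜ(Xₜ(ω₁, …, ωₜ₋₁), ωₜ). Assume the maps Xₜ, Fₜ(Xₜ), ‖∇Fₜ(Xₜ)‖², ‖Gₜ(Xₜ, ·)‖² and Fₜ₊₁(Xₜ₊₁) are measurable and integrable with respect to the product measures μ₁ ⊗ ⋯ ⊗ μₜ. Then Σₜ₌₁ᵀ E_{μ₁⊗⋯⊗μₜ₋₁}[Fₜ(Xₜ) − Fₜ*] ≤ (1/(2μζ))(F₁(x₁) − F₁*) + (K/(μζ)) Σₜ₌₁^{T−1} ηₜ + (1/(4μ²ζ)) Σₜ₌₁^{T−1} Jₜ² + (γβ/(2μ)) Σₜ₌₁^{T−1} σₜ². -/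

import Mathlib

open MeasureTheory
open scoped RealInnerProductSpace BigOperators

section plumbing
variable (Ω : ℕ → Type*) [∀ t, MeasurableSpace (Ω t)]

def snocEquiv (k : ℕ) :
    (Ω (k + 1) × ((i : Fin k) → Ω (i + 1))) ≃ᵐ ((i : Fin (k + 1)) → Ω (i + 1)) where
  toFun p := Fin.snoc (α := fun i : Fin (k + 1) => Ω (i + 1)) p.2 p.1
  invFun ω := (ω (Fin.last k), fun i => ω i.castSucc)
  left_inv p := by ext i <;> simp
  right_inv ω := by
    funext i
    induction i using Fin.lastCases with
    | last => simp
    | cast i => simp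
  measurable_toFun := by
    apply measurable_pi_iff.2
    intro i
    induction i using Fin.lastCases with
    | last =>
      simp only [Equiv.coe_fn_mk, Fin.snoc_last]
      exact measurable_fst
    | cast i =>
      simp only [Equiv.coe_fn_mk, Fin.snoc_castSucc]
      exact (measurable_pi_apply i).comp measurable_snd
  measurable_invFun :=
    (measurable_pi_apply _).prodMk <| measurable_pi_iff.2 fun i => measurable_pi_apply _

variable (P : (t : ℕ) → Measure (Ω t)) [∀ t, IsProbabilityMeasure (P t)]

lemma snocEquiv_measurePreserving (k : ℕ) :
    MeasurePreserving (snocEquiv Ω k)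
      ((P (k + 1)).prod (Measure.pi fun i : Fin k => P (i + 1)))
      (Measure.pi fun i : Fin (k + 1) => P (i + 1)) := by
  refine ⟨(snocEquiv Ω k).measurable, ?_⟩
  refine (Measure.pi_eq fun A hA => ?_).symm
  rw [MeasurableEquiv.map_apply]
  have hpre : (snocEquiv Ω k) ⁻¹' (Set.pi Set.univ A)
      = (A (Fin.last k)) ×ˢ (Set.pi Set.univ fun i : Fin k => A i.castSucc) := by
    ext p
    simp only [Set.mem_preimage, Set.mem_pi, Set.mem_univ, forall_true_left,
      Set.mem_prod]
    constructor
    · intro h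
      refine ⟨?_, fun i => ?_⟩
      · have := h (Fin.last k); simpa [snocEquiv] using this
      · have := h i.castSucc; simpa [snocEquiv] using this
    · rintro ⟨h1, h2⟩ i
      induction i using Fin.lastCases with
      | last => simpa [snocEquiv] using h1
      | cast i => simpa [snocEquiv] using h2 i
  rw [hpre, Measure.prod_prod, Measure.pi_pi, Fin.prod_univ_castSucc]
  simp only [Fin.coe_castSucc, Fin.val_last]
  ring
end plumbing

lemma integral_comp_mp {α β E : Type*} [MeasurableSpace α] [MeasurableSpace β]
    [NormedAddCommGroup E] [NormedSpace ℝ E]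
    {μ : Measure α} {ν : Measure β} {f : α → β}
    (h : MeasurePreserving f μ ν) {F : β → E} (hF : AEStronglyMeasurable F ν) :
    ∫ x, F (f x) ∂μ = ∫ y, F y ∂ν := by
  rw [← h.map_eq] at hF ⊢
  exact (integral_map h.measurable.aemeasurable hF).symm

lemma descent_lemma {n : ℕ} {f : EuclideanSpace ℝ (Fin n) → ℝ} {β : ℝ}
    (hf : Differentiable ℝ f)
    (hL : ∀ u v, ‖gradient f u - gradient f v‖ ≤ β * ‖u - v‖)
    (x d : EuclideanSpace ℝ (Fin n)) :
    f (x + d) ≤ f x + ⟪gradient f x, d⟫ + β / 2 * ‖d‖ ^ 2 := by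
  have hg : ∀ s : ℝ, HasDerivAt (fun s : ℝ => f (x + s • d))
      ⟪gradient f (x + s • d), d⟫ s := by
    intro s
    have hline : HasDerivAt (fun s : ℝ => x + s • d) d s := by
      simpa using ((hasDerivAt_id s).smul_const d).const_add x
    have hfd := ((hf (x + s • d)).hasGradientAt).hasFDerivAt
    have := hfd.comp_hasDerivAt s hline
    simpa [Function.comp_def] using this
  set φ : ℝ → ℝ := fun s =>
    f x + s * ⟪gradient f x, d⟫ + s ^ 2 * (β / 2 * ‖d‖ ^ 2) - f (x + s • d) with hφdef
  have hφ : ∀ s : ℝ, HasDerivAt φ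
      (⟪gradient f x, d⟫ + s * (β * ‖d‖ ^ 2) - ⟪gradient f (x + s • d), d⟫) s := by
    intro s
    have h1 : HasDerivAt (fun s : ℝ => f x + s * ⟪gradient f x, d⟫ + s ^ 2 * (β / 2 * ‖d‖ ^ 2))
        (⟪gradient f x, d⟫ + s * (β * ‖d‖ ^ 2)) s := by
      have h2 : HasDerivAt (fun s : ℝ => s * ⟪gradient f x, d⟫) ⟪gradient f x, d⟫ s := by
        simpa using (hasDerivAt_id s).mul_const ⟪gradient f x, d⟫
      have h3 : HasDerivAt (fun s : ℝ => s ^ 2 * (β / 2 * ‖d‖ ^ 2))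
          (s * (β * ‖d‖ ^ 2)) s := by
        have := (hasDerivAt_pow 2 s).mul_const (β / 2 * ‖d‖ ^ 2)
        refine this.congr_deriv ?_
        rw [show (2:ℕ) - 1 = 1 from rfl]; push_cast; ring
      exact (h2.const_add (f x)).add h3
    exact h1.sub (hg s)
  have hmono : MonotoneOn φ (Set.Icc (0:ℝ) 1) := by
    apply monotoneOn_of_deriv_nonneg (convex_Icc 0 1)
    · exact (fun s _ => ((hφ s).differentiableAt).continuousAt.continuousWithinAt)
    · exact fun s _ => ((hφ s).differentiableAt).differentiableWithinAt
    · intro s hs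
      rw [interior_Icc] at hs
      rw [(hφ s).deriv]
      have hinner : ⟪gradient f (x + s • d), d⟫ - ⟪gradient f x, d⟫
          ≤ s * (β * ‖d‖ ^ 2) := by
        rw [← inner_sub_left]
        calc ⟪gradient f (x + s • d) - gradient f x, d⟫
            ≤ ‖gradient f (x + s • d) - gradient f x‖ * ‖d‖ := real_inner_le_norm _ _
          _ ≤ (β * ‖x + s • d - x‖) * ‖d‖ := by
              gcongr; exact hL _ _
          _ = s * (β * ‖d‖ ^ 2) := by
              have : x + s • d - x = s • d := by abel
              rw [this, norm_smul, Real.norm_eq_abs, abs_of_pos hs.1]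
              ring
      linarith
  have h01 := hmono (Set.mem_Icc.2 ⟨le_refl 0, zero_le_one⟩)
    (Set.mem_Icc.2 ⟨zero_le_one, le_refl 1⟩) zero_le_one
  have hφ0 : φ 0 = 0 := by simp [hφdef]
  have hφ1 : φ 1 = f x + ⟪gradient f x, d⟫ + β / 2 * ‖d‖ ^ 2 - f (x + d) := by
    simp [hφdef]
  rw [hφ0, hφ1] at h01
  linarith


lemma second_moment {Ω : Type*} [MeasurableSpace Ω] {P : Measure Ω} [IsProbabilityMeasure P]
    {E : Type*} [NormedAddCommGroup E] [InnerProductSpace ℝ E] [CompleteSpace E]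
    {g : Ω → E} {m : E} {s2 : ℝ}
    (hgi : Integrable g P) (hgsq : Integrable (fun a => ‖g a‖ ^ 2) P)
    (hmean : ∫ a, g a ∂P = m) (hvar : ∫ a, ‖g a - m‖ ^ 2 ∂P ≤ s2) :
    ∫ a, ‖g a‖ ^ 2 ∂P ≤ s2 + ‖m‖ ^ 2 := by
  have hsub : Integrable (fun a => ‖g a - m‖ ^ 2) P := by
    have h1 : (fun a => ‖g a - m‖ ^ 2)
        = fun a => ‖g a‖ ^ 2 - 2 * ⟪g a, m⟫ + ‖m‖ ^ 2 :=
      funext fun a => norm_sub_sq_real _ _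
    rw [h1]
    exact (hgsq.sub ((hgi.inner_const m).const_mul 2)).add (integrable_const _)
  have hinner : Integrable (fun a => 2 * ⟪g a - m, m⟫) P :=
    ((hgi.sub (integrable_const m)).inner_const m).const_mul 2
  have hpt : ∀ a, ‖g a‖ ^ 2
      = ‖g a - m‖ ^ 2 + 2 * ⟪g a - m, m⟫ + ‖m‖ ^ 2 := by
    intro a
    have := norm_add_sq_real (g a - m) m
    simpa using this
  have key : ∫ a, ‖g a‖ ^ 2 ∂P
      = (∫ a, ‖g a - m‖ ^ 2 ∂P) + (∫ a, 2 * ⟪g a - m, m⟫ ∂P) + ‖m‖ ^ 2 := by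
    calc ∫ a, ‖g a‖ ^ 2 ∂P
        = ∫ a, (‖g a - m‖ ^ 2 + 2 * ⟪g a - m, m⟫ + ‖m‖ ^ 2) ∂P := by
          exact integral_congr_ae (Filter.Eventually.of_forall hpt)
      _ = (∫ a, (‖g a - m‖ ^ 2 + 2 * ⟪g a - m, m⟫) ∂P) + ∫ _a, ‖m‖ ^ 2 ∂P :=
          integral_add (hsub.add hinner) (integrable_const _)
      _ = (∫ a, ‖g a - m‖ ^ 2 ∂P) + (∫ a, 2 * ⟪g a - m, m⟫ ∂P) + ‖m‖ ^ 2 := by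
          rw [integral_add hsub hinner, integral_const]; simp
  have hgm : Integrable (fun a => g a - m) P := hgi.sub (integrable_const m)
  have hzero : ∫ a, 2 * ⟪g a - m, m⟫ ∂P = 0 := by
    rw [integral_const_mul]
    have : ∫ a, ⟪g a - m, m⟫ ∂P = ⟪m, ∫ a, (g a - m) ∂P⟫ := by
      rw [← integral_inner hgm m]
      congr 1; funext a; exact real_inner_comm _ _
    rw [this, integral_sub hgi (integrable_const m), hmean, integral_const]
    simp
  rw [key, hzero]
  linarith


lemma one_step {n k : ℕ} (Ω : ℕ → Type*) [∀ t, MeasurableSpace (Ω t)]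
    (P : (t : ℕ) → Measure (Ω t)) [∀ t, IsProbabilityMeasure (P t)]
    {f : EuclideanSpace ℝ (Fin n) → ℝ} (hfdiff : Differentiable ℝ f)
    {β : ℝ} (hβ : 0 < β)
    (hfsmooth : ∀ u v, ‖gradient f u - gradient f v‖ ≤ β * ‖u - v‖)
    {g : EuclideanSpace ℝ (Fin n) → Ω (k + 1) → EuclideanSpace ℝ (Fin n)}
    (hgmeas : Measurable (Function.uncurry g))
    (hgint : ∀ x, Integrable (g x) (P (k + 1)))
    (hgmean : ∀ x, ∫ a, g x a ∂(P (k + 1)) = gradient f x)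
    {s2 : ℝ} (hgvar : ∀ x, ∫ a, ‖g x a - gradient f x‖ ^ 2 ∂(P (k + 1)) ≤ s2)
    {γ : ℝ} (hγ : 0 ≤ γ)
    {Yk : ((i : Fin k) → Ω (i + 1)) → EuclideanSpace ℝ (Fin n)} (hYk : Measurable Yk)
    {Yk1 : ((i : Fin (k + 1)) → Ω (i + 1)) → EuclideanSpace ℝ (Fin n)}
    (hrec : ∀ ω, Yk1 ω = Yk (fun i => ω i.castSucc)
      - γ • g (Yk (fun i => ω i.castSucc)) (ω (Fin.last k)))
    (hfYint : Integrable (fun ω => f (Yk ω)) (Measure.pi fun i : Fin k => P (i + 1)))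
    (hgradYint : Integrable (fun ω => ‖gradient f (Yk ω)‖ ^ 2)
      (Measure.pi fun i : Fin k => P (i + 1)))
    (hgYint : Integrable (fun ω : (i : Fin (k + 1)) → Ω (i + 1) =>
        ‖g (Yk (fun i => ω i.castSucc)) (ω (Fin.last k))‖ ^ 2)
      (Measure.pi fun i : Fin (k + 1) => P (i + 1)))
    (hfY1int : Integrable (fun ω => f (Yk1 ω)) (Measure.pi fun i : Fin (k + 1) => P (i + 1))) :
    ∫ ω, f (Yk1 ω) ∂(Measure.pi fun i : Fin (k + 1) => P (i + 1))
      ≤ (∫ ω, f (Yk ω) ∂(Measure.pi fun i : Fin k => P (i + 1)))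
        - (γ - γ ^ 2 * β / 2) *
            (∫ ω, ‖gradient f (Yk ω)‖ ^ 2 ∂(Measure.pi fun i : Fin k => P (i + 1)))
        + γ ^ 2 * β / 2 * s2 := by
  set πk : Measure ((i : Fin k) → Ω (i + 1)) := Measure.pi fun i : Fin k => P (i + 1) with hπk
  set πk1 : Measure ((i : Fin (k + 1)) → Ω (i + 1)) :=
    Measure.pi fun i : Fin (k + 1) => P (i + 1) with hπk1
  set Q : Measure (Ω (k + 1) × ((i : Fin k) → Ω (i + 1))) := (P (k + 1)).prod πk with hQ
  have mp : MeasurePreserving (snocEquiv Ω k) Q πk1 := snocEquiv_measurePreserving Ω P k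
  -- continuity facts
  have hfc : Continuous f := hfdiff.continuous
  have hgradc : Continuous (gradient f) := by
    have : LipschitzWith β.toNNReal (gradient f) := by
      apply LipschitzWith.of_dist_le_mul
      intro u v
      rw [dist_eq_norm, dist_eq_norm]
      calc ‖gradient f u - gradient f v‖ ≤ β * ‖u - v‖ := hfsmooth u v
        _ = ↑β.toNNReal * ‖u - v‖ := by rw [Real.coe_toNNReal β hβ.le]
    exact this.continuous
  -- key maps on the product space
  have hsnoc_cast : ∀ p : Ω (k + 1) × ((i : Fin k) → Ω (i + 1)),
      (fun i : Fin k => (snocEquiv Ω k p) i.castSucc) = p.2 := by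
    intro p; funext i; simp [snocEquiv]
  have hsnoc_last : ∀ p : Ω (k + 1) × ((i : Fin k) → Ω (i + 1)),
      (snocEquiv Ω k p) (Fin.last k) = p.1 := by
    intro p; simp [snocEquiv]
  -- measurability on Q
  have hYsnd : Measurable fun p : Ω (k + 1) × ((i : Fin k) → Ω (i + 1)) => Yk p.2 :=
    hYk.comp measurable_snd
  have hGmeasQ : Measurable fun p : Ω (k + 1) × ((i : Fin k) → Ω (i + 1)) =>
      g (Yk p.2) p.1 := by
    have : (fun p : Ω (k + 1) × ((i : Fin k) → Ω (i + 1)) => g (Yk p.2) p.1)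
        = Function.uncurry g ∘ (fun p => (Yk p.2, p.1)) := rfl
    rw [this]
    exact hgmeas.comp (hYsnd.prodMk measurable_fst)
  -- integrability on Q
  have mpsnd : MeasurePreserving (Prod.snd) Q πk := by
    refine ⟨measurable_snd, ?_⟩
    rw [hQ, Measure.map_snd_prod]; simp
  have hAint : Integrable (fun p : Ω (k + 1) × ((i : Fin k) → Ω (i + 1)) => f (Yk p.2)) Q :=
    (mpsnd.integrable_comp hfYint.aestronglyMeasurable).2 hfYint
  have hBint : Integrable (fun p : Ω (k + 1) × ((i : Fin k) → Ω (i + 1)) =>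
      ‖gradient f (Yk p.2)‖ ^ 2) Q :=
    (mpsnd.integrable_comp hgradYint.aestronglyMeasurable).2 hgradYint
  have hCint : Integrable (fun p : Ω (k + 1) × ((i : Fin k) → Ω (i + 1)) =>
      ‖g (Yk p.2) p.1‖ ^ 2) Q := by
    have h := (mp.integrable_comp hgYint.aestronglyMeasurable).2 hgYint
    have heq : (fun ω : (i : Fin (k + 1)) → Ω (i + 1) =>
        ‖g (Yk (fun i => ω i.castSucc)) (ω (Fin.last k))‖ ^ 2) ∘ (snocEquiv Ω k)
        = fun p => ‖g (Yk p.2) p.1‖ ^ 2 := by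
      funext p
      simp only [Function.comp_apply, hsnoc_cast p, hsnoc_last p]
    rwa [heq] at h
  have hDint : Integrable (fun p : Ω (k + 1) × ((i : Fin k) → Ω (i + 1)) =>
      ⟪gradient f (Yk p.2), g (Yk p.2) p.1⟫) Q := by
    apply Integrable.mono' ((hBint.add hCint).const_mul (1/2 : ℝ))
    · exact ((hgradc.measurable.comp hYsnd).inner hGmeasQ).aestronglyMeasurable
    · filter_upwards with p
      rw [Real.norm_eq_abs]
      calc |⟪gradient f (Yk p.2), g (Yk p.2) p.1⟫|
          ≤ ‖gradient f (Yk p.2)‖ * ‖g (Yk p.2) p.1‖ := abs_real_inner_le_norm _ _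
        _ ≤ 1/2 * (‖gradient f (Yk p.2)‖ ^ 2 + ‖g (Yk p.2) p.1‖ ^ 2) := by
            nlinarith [sq_nonneg (‖gradient f (Yk p.2)‖ - ‖g (Yk p.2) p.1‖),
              norm_nonneg (gradient f (Yk p.2)), norm_nonneg (g (Yk p.2) p.1)]
  have hLHSint : Integrable (fun p : Ω (k + 1) × ((i : Fin k) → Ω (i + 1)) =>
      f (Yk p.2 - γ • g (Yk p.2) p.1)) Q := by
    have h := (mp.integrable_comp hfY1int.aestronglyMeasurable).2 hfY1int
    have heq : (fun ω => f (Yk1 ω)) ∘ (snocEquiv Ω k)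
        = fun p => f (Yk p.2 - γ • g (Yk p.2) p.1) := by
      funext p
      simp only [Function.comp_apply, hrec, hsnoc_cast p, hsnoc_last p]
    rwa [heq] at h
  -- pointwise descent
  have hpt : ∀ p : Ω (k + 1) × ((i : Fin k) → Ω (i + 1)),
      f (Yk p.2 - γ • g (Yk p.2) p.1)
        ≤ f (Yk p.2) - γ * ⟪gradient f (Yk p.2), g (Yk p.2) p.1⟫
          + γ ^ 2 * β / 2 * ‖g (Yk p.2) p.1‖ ^ 2 := by
    intro p
    have := descent_lemma hfdiff hfsmooth (Yk p.2) (-(γ • g (Yk p.2) p.1))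
    rw [← sub_eq_add_neg] at this
    calc f (Yk p.2 - γ • g (Yk p.2) p.1)
        ≤ f (Yk p.2) + ⟪gradient f (Yk p.2), -(γ • g (Yk p.2) p.1)⟫
          + β / 2 * ‖-(γ • g (Yk p.2) p.1)‖ ^ 2 := this
      _ = f (Yk p.2) - γ * ⟪gradient f (Yk p.2), g (Yk p.2) p.1⟫
          + γ ^ 2 * β / 2 * ‖g (Yk p.2) p.1‖ ^ 2 := by
          have h1 : ⟪gradient f (Yk p.2), -(γ • g (Yk p.2) p.1)⟫
              = -(γ * ⟪gradient f (Yk p.2), g (Yk p.2) p.1⟫) := by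
            rw [inner_neg_right, real_inner_smul_right]
          have h2 : ‖-(γ • g (Yk p.2) p.1)‖ ^ 2 = γ ^ 2 * ‖g (Yk p.2) p.1‖ ^ 2 := by
            rw [norm_neg, norm_smul, mul_pow, Real.norm_eq_abs, sq_abs]
          rw [h1, h2]
          ring
  -- transfer the LHS integral to Q
  have hLHS_eq : ∫ ω, f (Yk1 ω) ∂πk1 = ∫ p, f (Yk p.2 - γ • g (Yk p.2) p.1) ∂Q := by
    rw [← integral_comp_mp mp hfY1int.aestronglyMeasurable]
    refine integral_congr_ae (Filter.Eventually.of_forall fun p => ?_)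
    simp only [hrec, hsnoc_cast p, hsnoc_last p]
  have hA_eq : ∫ p, f (Yk p.2) ∂Q = ∫ ω, f (Yk ω) ∂πk :=
    integral_comp_mp mpsnd hfYint.aestronglyMeasurable
  have hD_eq : ∫ p, ⟪gradient f (Yk p.2), g (Yk p.2) p.1⟫ ∂Q
      = ∫ ω, ‖gradient f (Yk ω)‖ ^ 2 ∂πk := by
    rw [hQ, integral_prod_symm _ hDint]
    refine integral_congr_ae (Filter.Eventually.of_forall fun y => ?_)
    show ∫ x, ⟪gradient f (Yk y), g (Yk y) x⟫ ∂(P (k + 1)) = _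
    rw [integral_inner (hgint (Yk y)), hgmean, real_inner_self_eq_norm_sq]
  have hC_le : ∫ p, ‖g (Yk p.2) p.1‖ ^ 2 ∂Q
      ≤ s2 + ∫ ω, ‖gradient f (Yk ω)‖ ^ 2 ∂πk := by
    rw [hQ, integral_prod_symm _ hCint]
    have hslice : ∀ᵐ y ∂πk, (∫ x, ‖g (Yk y) x‖ ^ 2 ∂(P (k + 1)))
        ≤ s2 + ‖gradient f (Yk y)‖ ^ 2 := by
      filter_upwards [hCint.prod_left_ae] with y hy
      exact second_moment (hgint (Yk y)) hy (hgmean (Yk y)) (hgvar (Yk y))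
    have hout : Integrable (fun y => ∫ x, ‖g (Yk y) x‖ ^ 2 ∂(P (k + 1))) πk :=
      hCint.integral_prod_right
    calc ∫ y, (∫ x, ‖g (Yk y) x‖ ^ 2 ∂(P (k + 1))) ∂πk
        ≤ ∫ y, (s2 + ‖gradient f (Yk y)‖ ^ 2) ∂πk :=
          integral_mono_ae hout ((integrable_const s2).add hgradYint) hslice
      _ = s2 + ∫ ω, ‖gradient f (Yk ω)‖ ^ 2 ∂πk := by
          rw [integral_add (integrable_const s2) hgradYint, integral_const]
          simp
  have hmono : ∫ p, f (Yk p.2 - γ • g (Yk p.2) p.1) ∂Q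
      ≤ ∫ p, (f (Yk p.2) - γ * ⟪gradient f (Yk p.2), g (Yk p.2) p.1⟫
          + γ ^ 2 * β / 2 * ‖g (Yk p.2) p.1‖ ^ 2) ∂Q :=
    integral_mono hLHSint
      ((hAint.sub (hDint.const_mul γ)).add (hCint.const_mul (γ ^ 2 * β / 2))) hpt
  have hsplit : ∫ p, (f (Yk p.2) - γ * ⟪gradient f (Yk p.2), g (Yk p.2) p.1⟫
          + γ ^ 2 * β / 2 * ‖g (Yk p.2) p.1‖ ^ 2) ∂Q
      = (∫ p, f (Yk p.2) ∂Q)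
        - γ * (∫ p, ⟪gradient f (Yk p.2), g (Yk p.2) p.1⟫ ∂Q)
        + γ ^ 2 * β / 2 * (∫ p, ‖g (Yk p.2) p.1‖ ^ 2 ∂Q) := by
    have hDγ : Integrable (fun p : Ω (k + 1) × ((i : Fin k) → Ω (i + 1)) =>
        γ * ⟪gradient f (Yk p.2), g (Yk p.2) p.1⟫) Q := hDint.const_mul γ
    have hADint : Integrable (fun p : Ω (k + 1) × ((i : Fin k) → Ω (i + 1)) =>
        f (Yk p.2) - γ * ⟪gradient f (Yk p.2), g (Yk p.2) p.1⟫) Q := hAint.sub hDγ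
    have hCc : Integrable (fun p : Ω (k + 1) × ((i : Fin k) → Ω (i + 1)) =>
        γ ^ 2 * β / 2 * ‖g (Yk p.2) p.1‖ ^ 2) Q := hCint.const_mul _
    rw [integral_add hADint hCc, integral_sub hAint hDγ, integral_const_mul, integral_const_mul]
  have hc : 0 ≤ γ ^ 2 * β / 2 := by positivity
  rw [hLHS_eq]
  rw [hsplit] at hmono
  rw [hA_eq, hD_eq] at hmono
  nlinarith [mul_le_mul_of_nonneg_left hC_le hc]

set_option maxHeartbeats 1000000

/-- **Regret bound of online stochastic gradient descent under the PL condition.**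
For `t = 1, …, T` the losses `F t : ℝⁿ → ℝ` are differentiable, `β`-smooth, attain
their infima `Fs t` and satisfy the PL condition with constant `mu`.  Successive
losses drift by `K * η t` in value and by `J t` in gradient.  Unbiased stochastic
gradient oracles `G t` on probability spaces `(Ω t, P t)` have variance at most
`(σ t)²`.  The iterate after `k` updates is `Y k`, a function of the first `k`
samples (so `Y k` is the iterate `X (k+1)` of the paper), started at `x1` and
updated by `Y (k+1) ω = Y k ω' - γ • G (k+1) (Y k ω') (ω (Fin.last k))` where `ω'`
drops the last sample.  With `γ ∈ (0, min(1/β, 1/(2 mu)))` and `ζ = γ - γ²β/2`,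
the regret `Σₜ₌₁ᵀ E[Fₜ(Xₜ) - Fₜ*]` is bounded as stated. -/
theorem stmt8 {n : ℕ} (hn : 1 ≤ n) (T : ℕ) (hT : 1 ≤ T)
    (β mu K : ℝ) (hβ : 0 < β) (hmu : 0 < mu) (hK : 0 < K)
    (F : ℕ → EuclideanSpace ℝ (Fin n) → ℝ) (Fs : ℕ → ℝ)
    (hFdiff : ∀ t, 1 ≤ t → t ≤ T → Differentiable ℝ (F t))
    (hFsmooth : ∀ t, 1 ≤ t → t ≤ T → ∀ u v : EuclideanSpace ℝ (Fin n),
      ‖gradient (F t) u - gradient (F t) v‖ ≤ β * ‖u - v‖)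
    (hFs_lb : ∀ t, 1 ≤ t → t ≤ T → ∀ x, Fs t ≤ F t x)
    (hFs_att : ∀ t, 1 ≤ t → t ≤ T → ∃ x, F t x = Fs t)
    (hPL : ∀ t, 1 ≤ t → t ≤ T → ∀ x,
      mu * (F t x - Fs t) ≤ (1 / 2) * ‖gradient (F t) x‖ ^ 2)
    (η J σ : ℕ → ℝ)
    (hη : ∀ t, 1 ≤ t → t ≤ T - 1 → 0 < η t)
    (hJ : ∀ t, 1 ≤ t → t ≤ T - 1 → 0 ≤ J t)
    (hσ : ∀ t, 1 ≤ t → t ≤ T - 1 → 0 ≤ σ t)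
    (hdrift : ∀ t, 1 ≤ t → t ≤ T - 1 → ∀ x, |F (t + 1) x - F t x| ≤ K * η t)
    (hgradshift : ∀ t, 1 ≤ t → t ≤ T - 1 → ∀ x,
      ‖gradient (F (t + 1)) x - gradient (F t) x‖ ≤ J t)
    (Ω : ℕ → Type*) [∀ t, MeasurableSpace (Ω t)]
    (P : (t : ℕ) → Measure (Ω t)) [∀ t, IsProbabilityMeasure (P t)]
    (G : (t : ℕ) → EuclideanSpace ℝ (Fin n) → Ω t → EuclideanSpace ℝ (Fin n))
    (hGmeas : ∀ t, 1 ≤ t → t ≤ T - 1 → Measurable (Function.uncurry (G t)))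
    (hGint : ∀ t, 1 ≤ t → t ≤ T - 1 → ∀ x, Integrable (G t x) (P t))
    (hGmean : ∀ t, 1 ≤ t → t ≤ T - 1 → ∀ x, ∫ ω, G t x ω ∂(P t) = gradient (F t) x)
    (hGvar : ∀ t, 1 ≤ t → t ≤ T - 1 → ∀ x,
      (∫ ω, ‖G t x ω - gradient (F t) x‖ ^ 2 ∂(P t)) ≤ (σ t) ^ 2)
    (x1 : EuclideanSpace ℝ (Fin n)) (γ ζ : ℝ)
    (hγ0 : 0 < γ) (hγ1 : γ < min (1 / β) (1 / (2 * mu)))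
    (hζ : ζ = γ - γ ^ 2 * β / 2)
    (Y : (k : ℕ) → ((i : Fin k) → Ω (i + 1)) → EuclideanSpace ℝ (Fin n))
    (hY0 : ∀ ω, Y 0 ω = x1)
    (hYrec : ∀ k : ℕ, k + 1 < T → ∀ ω : (i : Fin (k + 1)) → Ω (i + 1),
      Y (k + 1) ω = Y k (fun i => ω i.castSucc)
        - γ • G (k + 1) (Y k (fun i => ω i.castSucc)) (ω (Fin.last k)))
    (hYmeas : ∀ k, k < T → Measurable (Y k))
    (hFXint : ∀ k, k < T → Integrable (fun ω => F (k + 1) (Y k ω))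
      (Measure.pi (fun i : Fin k => P (i + 1))))
    (hgradXint : ∀ k, k < T → Integrable (fun ω => ‖gradient (F (k + 1)) (Y k ω)‖ ^ 2)
      (Measure.pi (fun i : Fin k => P (i + 1))))
    (hGXint : ∀ k : ℕ, k + 1 < T →
      Integrable (fun ω : (i : Fin (k + 1)) → Ω (i + 1) =>
          ‖G (k + 1) (Y k (fun i => ω i.castSucc)) (ω (Fin.last k))‖ ^ 2)
        (Measure.pi (fun i : Fin (k + 1) => P (i + 1)))) :
    ∑ k ∈ Finset.range T,
        (∫ ω, (F (k + 1) (Y k ω) - Fs (k + 1)) ∂(Measure.pi (fun i : Fin k => P (i + 1))))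
      ≤ (1 / (2 * mu * ζ)) * (F 1 x1 - Fs 1)
        + (K / (mu * ζ)) * ∑ t ∈ Finset.Icc 1 (T - 1), η t
        + (1 / (4 * mu ^ 2 * ζ)) * ∑ t ∈ Finset.Icc 1 (T - 1), (J t) ^ 2
        + (γ * β / (2 * mu)) * ∑ t ∈ Finset.Icc 1 (T - 1), (σ t) ^ 2 := by
  -- main proof
  classical
  have hζpos : 0 < ζ := by
    have hγβ : γ * β < 1 := by
      have h1 : γ < 1 / β := lt_of_lt_of_le hγ1 (min_le_left _ _)
      rw [lt_div_iff₀ hβ] at h1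
      exact h1
    rw [hζ]
    nlinarith
  have h2muζ : 2 * mu * ζ < 1 := by
    have h1 : γ < 1 / (2 * mu) := lt_of_lt_of_le hγ1 (min_le_right _ _)
    have h2 : 2 * mu * γ < 1 := by
      rw [lt_div_iff₀ (by positivity : (0:ℝ) < 2 * mu)] at h1
      linarith
    have hζγ : ζ ≤ γ := by rw [hζ]; nlinarith
    nlinarith
  have hγβ1 : γ * β ≤ 1 := by
    have h1 : γ < 1 / β := lt_of_lt_of_le hγ1 (min_le_left _ _)
    rw [lt_div_iff₀ hβ] at h1
    linarith
  -- the expected suboptimality sequence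
  set D : ℕ → ℝ := fun k =>
    (∫ ω, F (k + 1) (Y k ω) ∂(Measure.pi (fun i : Fin k => P (i + 1)))) - Fs (k + 1) with hD
  -- each summand of the goal equals D k
  have hsummand : ∀ k, k < T →
      (∫ ω, (F (k + 1) (Y k ω) - Fs (k + 1)) ∂(Measure.pi (fun i : Fin k => P (i + 1)))) = D k := by
    intro k hk
    rw [hD]
    rw [integral_sub (hFXint k hk) (integrable_const _), integral_const]
    simp
  -- D 0
  have hD0 : D 0 = F 1 x1 - Fs 1 := by
    rw [hD]
    simp only
    have : (fun ω : (i : Fin 0) → Ω (i + 1) => F 1 (Y 0 ω)) = fun _ => F 1 x1 := by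
      funext ω; rw [hY0]
    rw [this, integral_const]
    simp
  -- nonnegativity
  have hDnn : ∀ k, k < T → 0 ≤ D k := by
    intro k hk
    rw [hD]
    simp only [sub_nonneg]
    have : Fs (k + 1) = ∫ _ω, Fs (k + 1) ∂(Measure.pi (fun i : Fin k => P (i + 1))) := by
      rw [integral_const]; simp
    rw [this]
    exact integral_mono (integrable_const _) (hFXint k hk)
      (fun ω => hFs_lb (k + 1) (by omega) (by omega) (Y k ω))
  -- one-step recursion
  have hrecursion : ∀ k, k + 1 < T →
      D (k + 1) ≤ (1 - 2 * mu * ζ) * D k + 2 * K * η (k + 1)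
        + γ ^ 2 * β / 2 * (σ (k + 1)) ^ 2 := by
    intro k hk1
    have ht1 : 1 ≤ k + 1 := by omega
    have htT1 : k + 1 ≤ T - 1 := by omega
    have htT : k + 1 ≤ T := by omega
    have hkT : k < T := by omega
    -- integrability of F (k+1) ∘ Y (k+1)
    have hmeasY1 : Measurable (Y (k + 1)) := hYmeas (k + 1) hk1
    have hcont : Continuous (F (k + 1)) := (hFdiff (k + 1) ht1 htT).continuous
    have hcont2 : Continuous (F (k + 2)) :=
      (hFdiff (k + 2) (by omega) (by omega)).continuous
    have hdiffint : Integrable (fun ω : (i : Fin (k + 1)) → Ω (i + 1) =>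
        F (k + 1) (Y (k + 1) ω) - F (k + 2) (Y (k + 1) ω))
        (Measure.pi (fun i : Fin (k + 1) => P (i + 1))) := by
      apply Integrable.mono' (integrable_const (K * η (k + 1)))
      · exact ((hcont.measurable.comp hmeasY1).sub
          (hcont2.measurable.comp hmeasY1)).aestronglyMeasurable
      · filter_upwards with ω
        rw [Real.norm_eq_abs, abs_sub_comm]
        exact hdrift (k + 1) ht1 htT1 (Y (k + 1) ω)
    have hfY1int : Integrable (fun ω => F (k + 1) (Y (k + 1) ω))
        (Measure.pi (fun i : Fin (k + 1) => P (i + 1))) := by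
      have heq : (fun ω : (i : Fin (k + 1)) → Ω (i + 1) => F (k + 1) (Y (k + 1) ω))
          = fun ω => F (k + 2) (Y (k + 1) ω)
            + (F (k + 1) (Y (k + 1) ω) - F (k + 2) (Y (k + 1) ω)) := by
        funext ω; ring
      rw [heq]
      exact (hFXint (k + 1) hk1).add hdiffint
    -- apply the one-step lemma
    have hstep := one_step (k := k) Ω P (hFdiff (k + 1) ht1 htT) hβ
      (hFsmooth (k + 1) ht1 htT) (hGmeas (k + 1) ht1 htT1) (hGint (k + 1) ht1 htT1)
      (hGmean (k + 1) ht1 htT1) (hGvar (k + 1) ht1 htT1) hγ0.le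
      (hYmeas k hkT) (hYrec k hk1) (hFXint k hkT) (hgradXint k hkT)
      (hGXint k hk1) hfY1int
    -- PL inequality in expectation
    have hPLE : 2 * mu * ((∫ ω, F (k + 1) (Y k ω)
          ∂(Measure.pi (fun i : Fin k => P (i + 1)))) - Fs (k + 1))
        ≤ ∫ ω, ‖gradient (F (k + 1)) (Y k ω)‖ ^ 2
          ∂(Measure.pi (fun i : Fin k => P (i + 1))) := by
      have hint1 : Integrable (fun ω => 2 * mu * (F (k + 1) (Y k ω) - Fs (k + 1)))
          (Measure.pi (fun i : Fin k => P (i + 1))) :=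
        ((hFXint k hkT).sub (integrable_const _)).const_mul _
      have hmono := integral_mono hint1 (hgradXint k hkT) (fun ω => by
        have := hPL (k + 1) ht1 htT (Y k ω)
        linarith)
      calc 2 * mu * ((∫ ω, F (k + 1) (Y k ω)
            ∂(Measure.pi (fun i : Fin k => P (i + 1)))) - Fs (k + 1))
          = ∫ ω, 2 * mu * (F (k + 1) (Y k ω) - Fs (k + 1))
            ∂(Measure.pi (fun i : Fin k => P (i + 1))) := by
            rw [integral_const_mul, integral_sub (hFXint k hkT) (integrable_const _),
              integral_const]
            simp
        _ ≤ _ := hmono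
    -- drift of values and of infima
    have hdriftE : ∫ ω, F (k + 2) (Y (k + 1) ω)
          ∂(Measure.pi (fun i : Fin (k + 1) => P (i + 1)))
        ≤ (∫ ω, F (k + 1) (Y (k + 1) ω)
          ∂(Measure.pi (fun i : Fin (k + 1) => P (i + 1)))) + K * η (k + 1) := by
      have hsumint : Integrable (fun ω : (i : Fin (k + 1)) → Ω (i + 1) =>
          F (k + 1) (Y (k + 1) ω) + K * η (k + 1))
          (Measure.pi (fun i : Fin (k + 1) => P (i + 1))) :=
        hfY1int.add (integrable_const _)
      have := integral_mono (hFXint (k + 1) hk1) hsumint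
        (fun ω => by
          have h1 := abs_le.1 (hdrift (k + 1) ht1 htT1 (Y (k + 1) ω))
          show F (k + 2) (Y (k + 1) ω) ≤ F (k + 1) (Y (k + 1) ω) + K * η (k + 1)
          linarith [h1.2])
      rwa [integral_add hfY1int (integrable_const _), integral_const,
        probReal_univ, smul_eq_mul, one_mul] at this
    have hFsdrift : Fs (k + 1) ≤ Fs (k + 2) + K * η (k + 1) := by
      obtain ⟨xs, hxs⟩ := hFs_att (k + 2) (by omega) (by omega)
      have h1 := hFs_lb (k + 1) ht1 htT xs
      have h2 := abs_le.1 (hdrift (k + 1) ht1 htT1 xs)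
      rw [← hxs]
      linarith [h2.1]
    -- combine
    have hζdef : γ - γ ^ 2 * β / 2 = ζ := hζ.symm
    rw [hζdef] at hstep
    have hstep2 : ∫ ω, F (k + 1) (Y (k + 1) ω)
          ∂(Measure.pi (fun i : Fin (k + 1) => P (i + 1)))
        ≤ (∫ ω, F (k + 1) (Y k ω) ∂(Measure.pi (fun i : Fin k => P (i + 1))))
          - ζ * (2 * mu * ((∫ ω, F (k + 1) (Y k ω)
              ∂(Measure.pi (fun i : Fin k => P (i + 1)))) - Fs (k + 1)))
          + γ ^ 2 * β / 2 * (σ (k + 1)) ^ 2 := by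
      have := mul_le_mul_of_nonneg_left hPLE hζpos.le
      linarith
    simp only [hD]
    linarith
  -- rewrite goal sum as sum of D
  have hgoalsum : ∑ k ∈ Finset.range T,
      (∫ ω, (F (k + 1) (Y k ω) - Fs (k + 1)) ∂(Measure.pi (fun i : Fin k => P (i + 1))))
      = ∑ k ∈ Finset.range T, D k :=
    Finset.sum_congr rfl fun k hk => hsummand k (Finset.mem_range.1 hk)
  rw [hgoalsum]
  set S : ℝ := ∑ k ∈ Finset.range T, D k with hS
  set Aη : ℝ := ∑ t ∈ Finset.Icc 1 (T - 1), η t with hAη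
  set BJ : ℝ := ∑ t ∈ Finset.Icc 1 (T - 1), (J t) ^ 2 with hBJ
  set Cσ : ℝ := ∑ t ∈ Finset.Icc 1 (T - 1), (σ t) ^ 2 with hCσ
  clear_value D S Aη BJ Cσ
  -- reindex Icc sums to range sums
  have hreindex : ∀ f : ℕ → ℝ, ∑ t ∈ Finset.Icc 1 (T - 1), f t
      = ∑ k ∈ Finset.range (T - 1), f (k + 1) := by
    intro f
    rw [← Finset.Ico_add_one_right_eq_Icc, Finset.sum_Ico_eq_sum_range]
    have h9 : T - 1 + 1 - 1 = T - 1 := by omega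
    rw [h9]
    exact Finset.sum_congr rfl fun k _ => by rw [Nat.add_comm]
  -- key summed inequality
  have hkey : 2 * mu * ζ * S ≤ D 0 + 2 * K * Aη + γ ^ 2 * β / 2 * Cσ := by
    have hTsplit : S = D 0 + ∑ k ∈ Finset.range (T - 1), D (k + 1) := by
      rw [hS]
      have : T = (T - 1) + 1 := by omega
      rw [this, Finset.sum_range_succ']
      simp only [Nat.add_sub_cancel]
      ring
    have hsum_le : ∑ k ∈ Finset.range (T - 1), D (k + 1)
        ≤ (1 - 2 * mu * ζ) * S + 2 * K * Aη + γ ^ 2 * β / 2 * Cσ := by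
      have h1 : ∑ k ∈ Finset.range (T - 1), D (k + 1)
          ≤ ∑ k ∈ Finset.range (T - 1), ((1 - 2 * mu * ζ) * D k + 2 * K * η (k + 1)
              + γ ^ 2 * β / 2 * (σ (k + 1)) ^ 2) := by
        apply Finset.sum_le_sum
        intro k hk
        have hk' := Finset.mem_range.1 hk
        exact hrecursion k (by omega)
      have h2 : ∑ k ∈ Finset.range (T - 1), ((1 - 2 * mu * ζ) * D k + 2 * K * η (k + 1)
              + γ ^ 2 * β / 2 * (σ (k + 1)) ^ 2)
          = (1 - 2 * mu * ζ) * (∑ k ∈ Finset.range (T - 1), D k)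
            + 2 * K * (∑ k ∈ Finset.range (T - 1), η (k + 1))
            + γ ^ 2 * β / 2 * (∑ k ∈ Finset.range (T - 1), (σ (k + 1)) ^ 2) := by
        rw [Finset.sum_add_distrib, Finset.sum_add_distrib, Finset.mul_sum,
          Finset.mul_sum, Finset.mul_sum]
      have h3 : ∑ k ∈ Finset.range (T - 1), D k ≤ S := by
        rw [hS]
        apply Finset.sum_le_sum_of_subset_of_nonneg
        · exact Finset.range_subset_range.2 (by omega)
        · intro k hk _
          have hk' := Finset.mem_range.1 hk
          exact hDnn k (by omega)
      have ha : 0 ≤ 1 - 2 * mu * ζ := by linarith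
      have hAη' : Aη = ∑ k ∈ Finset.range (T - 1), η (k + 1) := by
        rw [hAη]; exact hreindex η
      have hCσ' : Cσ = ∑ k ∈ Finset.range (T - 1), (σ (k + 1)) ^ 2 := by
        rw [hCσ]; exact hreindex _
      rw [hAη', hCσ']
      calc ∑ k ∈ Finset.range (T - 1), D (k + 1) ≤ _ := h1
        _ = _ := h2
        _ ≤ (1 - 2 * mu * ζ) * S + 2 * K * (∑ k ∈ Finset.range (T - 1), η (k + 1))
            + γ ^ 2 * β / 2 * (∑ k ∈ Finset.range (T - 1), (σ (k + 1)) ^ 2) := by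
          have := mul_le_mul_of_nonneg_left h3 ha
          linarith
    have hexp : (1 - 2 * mu * ζ) * S = S - 2 * mu * ζ * S := by ring
    linarith [hTsplit, hsum_le, hexp]
  -- final arithmetic
  have hD0nn : 0 ≤ D 0 := hDnn 0 (by omega)
  have hBJnn : 0 ≤ BJ := by
    rw [hBJ]; exact Finset.sum_nonneg fun t _ => sq_nonneg _
  have hCσnn : 0 ≤ Cσ := by
    rw [hCσ]; exact Finset.sum_nonneg fun t _ => sq_nonneg _
  rw [hD0] at hkey
  have hRHS : 2 * mu * ζ * ((1 / (2 * mu * ζ)) * (F 1 x1 - Fs 1)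
      + (K / (mu * ζ)) * Aη + (1 / (4 * mu ^ 2 * ζ)) * BJ + (γ * β / (2 * mu)) * Cσ)
      = (F 1 x1 - Fs 1) + 2 * K * Aη + 1 / (2 * mu) * BJ + ζ * γ * β * Cσ := by
    field_simp
    ring
  have hσcoef : γ ^ 2 * β / 2 * Cσ ≤ ζ * γ * β * Cσ := by
    have hcoef : γ ^ 2 * β / 2 ≤ ζ * γ * β := by
      rw [hζ]
      nlinarith [mul_nonneg (mul_nonneg (sq_nonneg γ) hβ.le) (sub_nonneg.2 hγβ1)]
    exact mul_le_mul_of_nonneg_right hcoef hCσnn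
  have hfinal : 2 * mu * ζ * S ≤ 2 * mu * ζ * ((1 / (2 * mu * ζ)) * (F 1 x1 - Fs 1)
      + (K / (mu * ζ)) * Aη + (1 / (4 * mu ^ 2 * ζ)) * BJ + (γ * β / (2 * mu)) * Cσ) := by
    rw [hRHS]
    have hBJ2 : 0 ≤ 1 / (2 * mu) * BJ := by positivity
    linarith
  have hpos : 0 < 2 * mu * ζ := by positivity
  exact le_of_mul_le_mul_left hfinal hpos
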